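/- The function f_C : SO(n) → ℝ, f_C(A) = Σᵢ cᵢ·Aᵢᵢ with 0 ≤ c₁ < c₂ < ... < cₙ, is a Morse function: every critical point of f_C is non-degenerate. -/

import Mathlib

attribute [local instance] Matrix.normedAddCommGroup Matrix.normedSpace

/-- The index set of pairs `i < j` in `Fin n`. -/
def Pairs (n : ℕ) := {p : Fin n × Fin n // p.1 < p.2}

instance (n : ℕ) : Fintype (Pairs n) := Subtype.fintype _
instance (n : ℕ) : DecidableEq (Pairs n) := Subtype.instDecidableEq

/-- The rotation matrix `B i j θ`. -/
noncomputable def rotB (n : ℕ) (i j : Fin n) (θ : ℝ) : Matrix (Fin n) (Fin n) ℝ :=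
  Matrix.of fun k l =>
    if k = i ∧ l = i then Real.cos θ
    else if k = j ∧ l = j then Real.cos θ
    else if k = i ∧ l = j then -Real.sin θ
    else if k = j ∧ l = i then Real.sin θ
    else if k = l then 1 else 0

/-- `A ∈ SO(n)` is a critical point of `f_C` if the derivative of `f_C` along every
differentiable curve in `SO(n)` through `A` vanishes at `A`. -/
def IsCritPt (n : ℕ) (c : Fin n → ℝ) (A : Matrix (Fin n) (Fin n) ℝ) : Prop :=
  ∀ γ : ℝ → Matrix (Fin n) (Fin n) ℝ,
    (∀ t, γ t ∈ Matrix.specialOrthogonalGroup (Fin n) ℝ) → γ 0 = A →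
    DifferentiableAt ℝ γ 0 → deriv (fun t => ∑ i, c i * γ t i i) 0 = 0

/-- The Hessian of `f_C` at `A` in the local coordinates given by the rotations `B_{ij}`. -/
noncomputable def hessB (n : ℕ) (c : Fin n → ℝ) (A : Matrix (Fin n) (Fin n) ℝ) :
    Matrix (Pairs n) (Pairs n) ℝ :=
  Matrix.of fun p q =>
    deriv (fun φ => deriv
      (fun θ => ∑ k, c k * (A * rotB n p.1.1 p.1.2 θ * rotB n q.1.1 q.1.2 φ) k k) 0) 0

noncomputable def matP (n : ℕ) (i j : Fin n) : Matrix (Fin n) (Fin n) ℝ :=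
  Matrix.single i i 1 + Matrix.single j j 1

noncomputable def matS (n : ℕ) (i j : Fin n) : Matrix (Fin n) (Fin n) ℝ :=
  Matrix.single j i 1 - Matrix.single i j 1


variable {n : ℕ} {i j : Fin n}

lemma rotB_eq (h : i ≠ j) (θ : ℝ) :
    rotB n i j θ = Real.cos θ • matP n i j + Real.sin θ • matS n i j + (1 - matP n i j) := by
  ext k l
  simp only [rotB, matP, matS, Matrix.of_apply, Matrix.add_apply, Matrix.sub_apply,
    Matrix.smul_apply, Matrix.one_apply, Matrix.single, smul_eq_mul]
  by_cases hki : k = i <;> by_cases hkj : k = j <;> by_cases hli : l = i <;> by_cases hlj : l = j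
    <;> simp_all <;> ring_nf <;> simp_all [eq_comm]

lemma matP_mul_matP (h : i ≠ j) : matP n i j * matP n i j = matP n i j := by
  simp [matP, add_mul, mul_add, Matrix.single_mul_single_same,
    Matrix.single_mul_single_of_ne, h, h.symm]

lemma matP_mul_matS (h : i ≠ j) : matP n i j * matS n i j = matS n i j := by
  simp [matP, matS, add_mul, mul_sub, Matrix.single_mul_single_same,
    Matrix.single_mul_single_of_ne, h, h.symm]

lemma matS_mul_matP (h : i ≠ j) : matS n i j * matP n i j = matS n i j := by
  simp [matP, matS, sub_mul, mul_add, Matrix.single_mul_single_same,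
    Matrix.single_mul_single_of_ne, h, h.symm]
  abel

lemma matS_mul_matS (h : i ≠ j) : matS n i j * matS n i j = -matP n i j := by
  simp [matP, matS, sub_mul, mul_sub, Matrix.single_mul_single_same,
    Matrix.single_mul_single_of_ne, h, h.symm]
  abel

lemma rotB_mul (h : i ≠ j) (θ φ : ℝ) :
    rotB n i j θ * rotB n i j φ = rotB n i j (θ + φ) := by
  rw [rotB_eq h, rotB_eq h, rotB_eq h, Real.cos_add, Real.sin_add]
  simp only [add_mul, mul_add, sub_mul, mul_sub, smul_mul_assoc, mul_smul_comm, one_mul, mul_one,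
    matP_mul_matP h, matP_mul_matS h, matS_mul_matP h, matS_mul_matS h, smul_smul, smul_neg]
  module

lemma rotB_zero : rotB n i j 0 = 1 := by
  ext k l
  simp only [rotB, Matrix.of_apply, Real.cos_zero, Real.sin_zero, neg_zero, Matrix.one_apply]
  by_cases hki : k = i <;> by_cases hkj : k = j <;> by_cases hkl : k = l <;> simp_all <;> omega

lemma rotB_transpose (θ : ℝ) : (rotB n i j θ).transpose = rotB n i j (-θ) := by
  ext k l
  simp only [rotB, Matrix.transpose, Matrix.of_apply, Matrix.transpose_apply, Matrix.of_apply, Real.cos_neg, Real.sin_neg]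
  by_cases hki : k = i <;> by_cases hkj : k = j <;> by_cases hli : l = i <;> by_cases hlj : l = j
    <;> simp_all [eq_comm]

lemma rotB_star (θ : ℝ) : star (rotB n i j θ) = rotB n i j (-θ) := by
  rw [Matrix.star_eq_conjTranspose, Matrix.conjTranspose_eq_transpose_of_trivial, rotB_transpose]

lemma rotB_det (h : i ≠ j) (θ : ℝ) : (rotB n i j θ).det = 1 := by
  set d : ℝ → ℝ := fun t => (rotB n i j t).det with hd
  have hcont : Continuous d := by
    have : d = fun t =>
        (Real.cos t • matP n i j + Real.sin t • matS n i j + (1 - matP n i j)).det := by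
      funext t
      show (rotB n i j t).det = _
      rw [rotB_eq h]
    rw [this]
    exact (((Real.continuous_cos.smul continuous_const).add
      (Real.continuous_sin.smul continuous_const)).add continuous_const).matrix_det
  have hsq : ∀ t, d t = 1 ∨ d t = -1 := by
    intro t
    rw [← mul_self_eq_one_iff]
    have h1 : rotB n i j t * rotB n i j (-t) = 1 := by
      rw [rotB_mul h, add_neg_cancel, rotB_zero]
    have h2 : d (-t) = d t := by
      simp only [hd]
      rw [← rotB_transpose, Matrix.det_transpose]
    calc d t * d t = d t * d (-t) := by rw [h2]
      _ = 1 := by rw [hd]; simp only [← Matrix.det_mul, h1, Matrix.det_one]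
  rcases hsq θ with h1 | h1
  · exact h1
  · exfalso
    set g : ℝ → ℝ := fun t => d (t * θ) with hg
    have hgc : ContinuousOn g (Set.Icc 0 1) :=
      (hcont.comp (continuous_id.mul continuous_const)).continuousOn
    have hg0 : g 0 = 1 := by simp [hg, hd, rotB_zero]
    have hg1 : g 1 = -1 := by simp [hg, h1]
    have := intermediate_value_Icc' (by norm_num : (0:ℝ) ≤ 1) hgc
    rw [hg0, hg1] at this
    obtain ⟨x, -, hx⟩ := this (by norm_num : (0:ℝ) ∈ Set.Icc (-1) 1)
    rcases hsq (x * θ) with h2 | h2 <;> rw [hg] at hx <;> simp only [hx] at h2 <;> norm_num at h2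

lemma rotB_mem (h : i ≠ j) (θ : ℝ) :
    rotB n i j θ ∈ Matrix.specialOrthogonalGroup (Fin n) ℝ := by
  rw [Matrix.mem_specialOrthogonalGroup_iff]
  refine ⟨?_, rotB_det h θ⟩
  rw [Matrix.mem_orthogonalGroup_iff, rotB_transpose, rotB_mul h, add_neg_cancel, rotB_zero]

lemma trc_rotB_eq (c : Fin n → ℝ) (M N : Matrix (Fin n) (Fin n) ℝ) (h : i ≠ j) (θ : ℝ) :
    ∑ k, c k * (M * rotB n i j θ * N) k k
      = Real.cos θ * ∑ k, c k * (M * matP n i j * N) k k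
      + Real.sin θ * ∑ k, c k * (M * matS n i j * N) k k
      + ∑ k, c k * (M * (1 - matP n i j) * N) k k := by
  rw [rotB_eq h]
  simp only [Matrix.mul_add, Matrix.add_mul, Matrix.mul_smul, Matrix.smul_mul,
    Matrix.add_apply, Matrix.smul_apply, smul_eq_mul, mul_add, Finset.sum_add_distrib,
    Finset.mul_sum]
  congr 1
  · congr 1
    · exact Finset.sum_congr rfl (fun k _ => by ring)
    · exact Finset.sum_congr rfl (fun k _ => by ring)

lemma deriv_trc (c : Fin n → ℝ) (M N : Matrix (Fin n) (Fin n) ℝ) (h : i ≠ j) :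
    deriv (fun θ => ∑ k, c k * (M * rotB n i j θ * N) k k) 0
      = ∑ k, c k * (M * matS n i j * N) k k := by
  have heq : (fun θ => ∑ k, c k * (M * rotB n i j θ * N) k k)
      = fun θ => Real.cos θ * (∑ k, c k * (M * matP n i j * N) k k)
        + Real.sin θ * (∑ k, c k * (M * matS n i j * N) k k)
        + ∑ k, c k * (M * (1 - matP n i j) * N) k k :=
    funext fun θ => trc_rotB_eq c M N h θ
  rw [heq]
  have hD : HasDerivAt (fun θ => Real.cos θ * (∑ k, c k * (M * matP n i j * N) k k)
        + Real.sin θ * (∑ k, c k * (M * matS n i j * N) k k)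
        + ∑ k, c k * (M * (1 - matP n i j) * N) k k)
      (-Real.sin 0 * (∑ k, c k * (M * matP n i j * N) k k)
        + Real.cos 0 * (∑ k, c k * (M * matS n i j * N) k k)) 0 :=
    (((Real.hasDerivAt_cos 0).mul_const _).add ((Real.hasDerivAt_sin 0).mul_const _)).add_const _
  rw [hD.deriv]
  simp

lemma diff_mul_rotB (h : i ≠ j) (A : Matrix (Fin n) (Fin n) ℝ) :
    DifferentiableAt ℝ (fun t => A * rotB n i j t) 0 := by
  have heq : (fun t => A * rotB n i j t)
      = fun t => Real.cos t • (A * matP n i j) + Real.sin t • (A * matS n i j)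
        + A * (1 - matP n i j) := by
    funext t
    rw [rotB_eq h, Matrix.mul_add, Matrix.mul_add, Matrix.mul_smul, Matrix.mul_smul]
  rw [heq]
  exact ((Real.differentiable_cos.differentiableAt.smul_const _).add
    (Real.differentiable_sin.differentiableAt.smul_const _)).add_const _

lemma deriv_trc' (c : Fin n → ℝ) (M : Matrix (Fin n) (Fin n) ℝ) (h : i ≠ j) :
    deriv (fun θ => ∑ k, c k * (M * rotB n i j θ) k k) 0
      = ∑ k, c k * (M * matS n i j) k k := by
  have := deriv_trc c M 1 h
  simp only [Matrix.mul_one] at this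
  exact this

lemma trE (c : Fin n → ℝ) (A : Matrix (Fin n) (Fin n) ℝ) (a b : Fin n) :
    ∑ k, c k * (A * Matrix.single a b (1:ℝ)) k k = c b * A b a := by
  rw [Finset.sum_eq_single b]
  · rw [Matrix.mul_single_apply_same]; ring
  · intro k _ hk
    rw [Matrix.mul_single_apply_of_ne (hbj := hk), mul_zero]
  · intro hb; exact absurd (Finset.mem_univ b) hb

lemma trS (c : Fin n → ℝ) (A : Matrix (Fin n) (Fin n) ℝ) :
    ∑ k, c k * (A * matS n i j) k k = c i * A i j - c j * A j i := by
  rw [matS]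
  simp only [Matrix.mul_sub, Matrix.sub_apply, mul_sub, Finset.sum_sub_distrib, trE]

lemma crit_eq {c : Fin n → ℝ} {A : Matrix (Fin n) (Fin n) ℝ}
    (hA : A ∈ Matrix.specialOrthogonalGroup (Fin n) ℝ) (hcrit : IsCritPt n c A)
    (h : i ≠ j) : c i * A i j - c j * A j i = 0 := by
  have hmem : ∀ t, A * rotB n i j t ∈ Matrix.specialOrthogonalGroup (Fin n) ℝ :=
    fun t => mul_mem hA (rotB_mem h t)
  have h0 : A * rotB n i j 0 = A := by rw [rotB_zero, Matrix.mul_one]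
  have := hcrit (fun t => A * rotB n i j t) hmem h0 (diff_mul_rotB h A)
  rwa [deriv_trc' c A h, trS] at this

lemma A_offdiag {c : Fin n → ℝ} {A : Matrix (Fin n) (Fin n) ℝ} (hc : StrictMono c)
    (hc0 : ∀ i, 0 ≤ c i)
    (hA : A ∈ Matrix.specialOrthogonalGroup (Fin n) ℝ) (hcrit : IsCritPt n c A) :
    ∀ i j : Fin n, i ≠ j → A i j = 0 := by
  have hAAt : A * A.transpose = 1 := by
    have := (Matrix.mem_specialOrthogonalGroup_iff.mp hA).1
    rw [Matrix.mem_orthogonalGroup_iff] at this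
    exact this
  have hsym : A.transpose * Matrix.diagonal c = Matrix.diagonal c * A := by
    ext a b
    rw [Matrix.mul_diagonal, Matrix.diagonal_mul, Matrix.transpose_apply]
    by_cases hab : a = b
    · subst hab; ring
    · have := crit_eq hA hcrit hab
      linarith
  have hACA : A * Matrix.diagonal c * A = Matrix.diagonal c := by
    calc A * Matrix.diagonal c * A = A * (Matrix.diagonal c * A) := by rw [mul_assoc]
      _ = A * (A.transpose * Matrix.diagonal c) := by rw [hsym]
      _ = A * A.transpose * Matrix.diagonal c := by rw [mul_assoc]
      _ = Matrix.diagonal c := by rw [hAAt, one_mul]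
  have hCA : Matrix.diagonal c * A.transpose = A * Matrix.diagonal c := by
    calc Matrix.diagonal c * A.transpose = A * Matrix.diagonal c * A * A.transpose := by
          rw [hACA]
      _ = A * Matrix.diagonal c * (A * A.transpose) := by rw [mul_assoc, mul_assoc]
      _ = A * Matrix.diagonal c := by rw [hAAt, mul_one]
  intro i j hij
  have h1 : c i * A i j - c j * A j i = 0 := crit_eq hA hcrit hij
  have h2 : c i * A j i = A i j * c j := by
    have := congrFun (congrFun hCA i) j
    rwa [Matrix.diagonal_mul, Matrix.mul_diagonal, Matrix.transpose_apply] at this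
  have hkey : (c i ^ 2 - c j ^ 2) * A i j = 0 := by linear_combination c i * h1 + c j * h2
  have hne : c i ^ 2 - c j ^ 2 ≠ 0 := by
    rcases (hc.injective.ne hij).lt_or_gt with h | h <;> nlinarith [hc0 i, hc0 j]
  rcases mul_eq_zero.mp hkey with h | h
  · exact absurd h hne
  · exact h

lemma A_diag {c : Fin n → ℝ} {A : Matrix (Fin n) (Fin n) ℝ} (hc : StrictMono c)
    (hc0 : ∀ i, 0 ≤ c i)
    (hA : A ∈ Matrix.specialOrthogonalGroup (Fin n) ℝ) (hcrit : IsCritPt n c A) :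
    ∀ i : Fin n, A i i = 1 ∨ A i i = -1 := by
  have hAAt : A * A.transpose = 1 := by
    have := (Matrix.mem_specialOrthogonalGroup_iff.mp hA).1
    rw [Matrix.mem_orthogonalGroup_iff] at this
    exact this
  intro i
  have h1 : (A * A.transpose) i i = 1 := by rw [hAAt, Matrix.one_apply_eq]
  rw [Matrix.mul_apply] at h1
  rw [Finset.sum_eq_single i] at h1
  · rw [Matrix.transpose_apply] at h1
    exact mul_self_eq_one_iff.mp h1
  · intro k _ hk
    rw [A_offdiag hc hc0 hA hcrit i k (Ne.symm hk), zero_mul]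
  · intro h; exact absurd (Finset.mem_univ i) h

lemma hessB_apply (c : Fin n → ℝ) (A : Matrix (Fin n) (Fin n) ℝ) (p q : Pairs n) :
    hessB n c A p q
      = ∑ k, c k * (A * matS n p.1.1 p.1.2 * matS n q.1.1 q.1.2) k k := by
  have hp : p.1.1 ≠ p.1.2 := ne_of_lt p.2
  have hq : q.1.1 ≠ q.1.2 := ne_of_lt q.2
  show deriv (fun φ => deriv
      (fun θ => ∑ k, c k * (A * rotB n p.1.1 p.1.2 θ * rotB n q.1.1 q.1.2 φ) k k) 0) 0 = _
  have hinner : (fun φ => deriv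
      (fun θ => ∑ k, c k * (A * rotB n p.1.1 p.1.2 θ * rotB n q.1.1 q.1.2 φ) k k) 0)
      = fun φ => ∑ k, c k * (A * matS n p.1.1 p.1.2 * rotB n q.1.1 q.1.2 φ) k k :=
    funext fun φ => deriv_trc c A _ hp
  rw [hinner, deriv_trc' c _ hq]

lemma mulS_apply (A : Matrix (Fin n) (Fin n) ℝ) (x y : Fin n) :
    (A * matS n i j) x y
      = (if y = i then A x j else 0) - (if y = j then A x i else 0) := by
  rw [matS, Matrix.mul_sub, Matrix.sub_apply]
  congr 1
  · by_cases hy : y = i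
    · subst hy; rw [Matrix.mul_single_apply_same, if_pos rfl, mul_one]
    · rw [Matrix.mul_single_apply_of_ne (hbj := hy), if_neg hy]
  · by_cases hy : y = j
    · subst hy; rw [Matrix.mul_single_apply_same, if_pos rfl, mul_one]
    · rw [Matrix.mul_single_apply_of_ne (hbj := hy), if_neg hy]

lemma trSS (c : Fin n → ℝ) (A : Matrix (Fin n) (Fin n) ℝ) (i j k l : Fin n) :
    ∑ m, c m * (A * matS n i j * matS n k l) m m
      = c k * ((if l = i then A k j else 0) - (if l = j then A k i else 0))
        - c l * ((if k = i then A l j else 0) - (if k = j then A l i else 0)) := by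
  have hkl : matS n k l = Matrix.single l k 1 - Matrix.single k l 1 := rfl
  conv_lhs => rw [hkl]
  simp only [Matrix.mul_sub, Matrix.sub_apply, mul_sub, Finset.sum_sub_distrib, trE]
  rw [mulS_apply, mulS_apply]
  ring

lemma hessB_diag {c : Fin n → ℝ} {A : Matrix (Fin n) (Fin n) ℝ} (hc : StrictMono c)
    (hc0 : ∀ i, 0 ≤ c i)
    (hA : A ∈ Matrix.specialOrthogonalGroup (Fin n) ℝ) (hcrit : IsCritPt n c A) :
    hessB n c A = Matrix.diagonal
      (fun p : Pairs n => -(c p.1.1 * A p.1.1 p.1.1 + c p.1.2 * A p.1.2 p.1.2)) := by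
  have hoff := A_offdiag hc hc0 hA hcrit
  ext p q
  rw [hessB_apply, trSS, Matrix.diagonal_apply]
  obtain ⟨⟨i, j⟩, hij⟩ := p
  obtain ⟨⟨k, l⟩, hkl⟩ := q
  simp only at hij hkl ⊢
  by_cases hpq : (⟨(i, j), hij⟩ : Pairs n) = ⟨(k, l), hkl⟩
  · have hik : i = k ∧ j = l := by
      have := congrArg (fun r : Pairs n => r.1) hpq
      exact Prod.mk.injEq .. ▸ Prod.ext_iff.mp this
    obtain ⟨rfl, rfl⟩ : i = k ∧ j = l := hik
    erw [if_pos hpq]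
    rw [if_neg (ne_of_lt hij).symm, if_pos rfl, if_pos rfl, if_neg (ne_of_lt hij)]
    ring
  · erw [if_neg hpq]
    have hne : ¬(i = k ∧ j = l) := by
      rintro ⟨rfl, rfl⟩
      exact hpq rfl
    have e1 : (if l = i then A k j else 0) = 0 := by
      split_ifs with h
      · subst h
        exact hoff k j (ne_of_lt (hkl.trans hij))
      · rfl
    have e2 : (if l = j then A k i else 0) = 0 := by
      split_ifs with h
      · subst h
        refine hoff k i (fun hki => hne ⟨hki.symm, rfl⟩)
      · rfl
    have e3 : (if k = i then A l j else 0) = 0 := by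
      split_ifs with h
      · subst h
        refine hoff l j (fun hlj => hne ⟨rfl, hlj.symm⟩)
      · rfl
    have e4 : (if k = j then A l i else 0) = 0 := by
      split_ifs with h
      · subst h
        exact hoff l i (ne_of_gt (hij.trans hkl))
      · rfl
    rw [e1, e2, e3, e4]
    ring


/-- The function `f_C : SO(n) → ℝ`, `f_C(A) = ∑ i, c i * A i i` with
`0 ≤ c 0 < ... < c (n-1)`, is a Morse function: every critical point of `f_C` is
non-degenerate, i.e. the Hessian of `f_C` in the local coordinates given by the rotations
`B_{ij}` is invertible there. -/
theorem fC_isMorse (n : ℕ) (c : Fin n → ℝ) (hc : StrictMono c) (hc0 : ∀ i, 0 ≤ c i)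
    (A : Matrix (Fin n) (Fin n) ℝ) (hA : A ∈ Matrix.specialOrthogonalGroup (Fin n) ℝ)
    (hcrit : IsCritPt n c A) :
    (hessB n c A).det ≠ 0 := by
  rw [hessB_diag hc hc0 hA hcrit, Matrix.det_diagonal]
  refine Finset.prod_ne_zero_iff.mpr fun p _ => ?_
  have hlt : c p.1.1 < c p.1.2 := hc p.2
  have h0 : 0 ≤ c p.1.1 := hc0 p.1.1
  rw [neg_ne_zero]
  rcases A_diag hc hc0 hA hcrit p.1.1 with h1 | h1 <;>
    rcases A_diag hc hc0 hA hcrit p.1.2 with h2 | h2 <;>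
      rw [h1, h2] <;> intro hcon <;>
        simp only [mul_one, mul_neg_one] at hcon <;> linarith
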